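/- Let n ≥ 1 and let λ = (λ_1 ≥ λ_2 ≥ … ≥ λ_n ≥ 0) be a partition with at most n parts. Then, in the polynomial ring ℤ[x_1,…,x_n], the Schur polynomial satisfies S_λ(x_1,…,x_n) · det(x_i^{n−j})_{1≤i,j≤n} = det(x_i^{λ_j+n−j})_{1≤i,j≤n}. Equivalently, S_λ equals the quotient of the alternant det(x_i^{λ_j+n−j}) by the Vandermonde determinant det(x_i^{n−j}). -/

import Mathlib

/-- `T` is a semistandard Young tableau of shape `lam` (a partition with at most `n` parts,
rows and entries 0-indexed: `T i j` is the entry, in `{0,…,n-1}` standing for `{1,…,n}`,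
in row `i`, column `j`): rows weakly increase and columns strictly increase. -/
def IsSSYT {n : ℕ} (lam : Fin n → ℕ) (T : ∀ i : Fin n, Fin (lam i) → Fin n) : Prop :=
  (∀ (i : Fin n) (j j' : Fin (lam i)), j ≤ j' → T i j ≤ T i j') ∧
  (∀ (i i' : Fin n) (j : Fin (lam i)) (j' : Fin (lam i')),
    i < i' → (j : ℕ) = (j' : ℕ) → T i j < T i' j')

open MvPolynomial in
/-- The Schur polynomial `S_λ(x_1,…,x_n) = Σ_T x^T`, the sum over all semistandard Young
tableaux `T` of shape `λ` with entries in `{1,…,n}` of the product over the cells of `λ`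
of the variable indexed by the entry. -/
noncomputable def schurPoly (n : ℕ) (lam : Fin n → ℕ) : MvPolynomial (Fin n) ℤ :=
  ∑ᶠ T : {T : ∀ i : Fin n, Fin (lam i) → Fin n // IsSSYT lam T},
    ∏ i : Fin n, ∏ j : Fin (lam i), X (T.1 i j)

namespace SchurAux

open MvPolynomial Finset

open scoped Classical in
noncomputable def ssytFinset (n : ℕ) (lam : Fin n → ℕ) :
    Finset (∀ i : Fin n, Fin (lam i) → Fin n) :=
  Finset.univ.filter (fun T => IsSSYT lam T)

lemma mem_ssytFinset {n : ℕ} {lam : Fin n → ℕ} {T : ∀ i : Fin n, Fin (lam i) → Fin n} :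
    T ∈ ssytFinset n lam ↔ IsSSYT lam T := by
  classical
  simp [ssytFinset]

lemma schurPoly_eq_sum (n : ℕ) (lam : Fin n → ℕ) :
    schurPoly n lam = ∑ T ∈ ssytFinset n lam, ∏ i : Fin n, ∏ j : Fin (lam i), X (T i j) := by
  classical
  letI : Fintype {T : ∀ i : Fin n, Fin (lam i) → Fin n // IsSSYT lam T} := Fintype.ofFinite _
  have h1 : schurPoly n lam = ∑ T : {T : ∀ i : Fin n, Fin (lam i) → Fin n // IsSSYT lam T},
      ∏ i : Fin n, ∏ j : Fin (lam i), X (T.1 i j) :=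
    finsum_eq_sum_of_fintype
      (fun T : {T : ∀ i : Fin n, Fin (lam i) → Fin n // IsSSYT lam T} =>
        ∏ i : Fin n, ∏ j : Fin (lam i), X (T.1 i j))
  rw [h1]
  exact (Finset.sum_subtype _ (fun x => mem_ssytFinset)
    (fun T => ∏ i : Fin n, ∏ j : Fin (lam i), X (T i j))).symm


lemma geom_sum_mul_Icc {S : Type*} [CommRing S] (x t : S) (d l : ℕ) :
    ∀ u, l ≤ u → (x - t) * ∑ m ∈ Finset.Icc l u, t ^ (u - m) * x ^ (m + d)
      = x ^ (u + d + 1) - t ^ (u - l + 1) * x ^ (l + d) := by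
  intro u hu
  induction u, hu using Nat.le_induction with
  | base => simp [Finset.Icc_self]; ring
  | succ u hu ih =>
    have hins : Finset.Icc l (u + 1) = insert (u + 1) (Finset.Icc l u) := by
      ext m; simp only [Finset.mem_Icc, Finset.mem_insert]; omega
    rw [hins, Finset.sum_insert (by simp)]
    have hsum : ∑ m ∈ Finset.Icc l u, t ^ (u + 1 - m) * x ^ (m + d)
        = t * ∑ m ∈ Finset.Icc l u, t ^ (u - m) * x ^ (m + d) := by
      rw [Finset.mul_sum]
      refine Finset.sum_congr rfl fun m hm => ?_
      have hm' : m ≤ u := (Finset.mem_Icc.mp hm).2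
      have : u + 1 - m = (u - m) + 1 := by omega
      rw [this, pow_succ]; ring
    rw [hsum, Nat.sub_self, pow_zero, one_mul, mul_add,
      show (x - t) * (t * ∑ m ∈ Finset.Icc l u, t ^ (u - m) * x ^ (m + d))
        = t * ((x - t) * ∑ m ∈ Finset.Icc l u, t ^ (u - m) * x ^ (m + d)) from by ring, ih,
      show u + 1 - l + 1 = (u - l + 1) + 1 from by omega]
    ring

lemma det_rows_sum {N : ℕ} {S : Type*} [CommRing S] (A : Fin N → Finset ℕ)
    (f : Fin N → ℕ → Fin N → S) :
    (Matrix.of fun j i => ∑ m ∈ A j, f j m i).det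
      = ∑ r ∈ Fintype.piFinset A, (Matrix.of fun j i => f j (r j) i).det := by
  classical
  have h0 : (Matrix.of fun j i => ∑ m ∈ A j, f j m i)
      = (fun j => ∑ m ∈ A j, (f j m : Fin N → S)) := by
    ext j i; simp
  show Matrix.detRowAlternating _ = _
  rw [h0]
  exact (Matrix.detRowAlternating : (Fin N → S) [⋀^Fin N]→ₗ[S] S).toMultilinearMap.map_sum_finset
    (fun j m => (f j m : Fin N → S)) A


lemma alternant_branch {n : ℕ} (lam : Fin (n+1) → ℕ) (hlam : Antitone lam) :
    (Matrix.of fun i j : Fin (n+1) =>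
        (X i : MvPolynomial (Fin (n+1)) ℤ) ^ (lam j + (n - (j:ℕ)))).det
    = (X (Fin.last n) : MvPolynomial (Fin (n+1)) ℤ) ^ (lam (Fin.last n))
      * (∏ i : Fin n, ((X i.castSucc : MvPolynomial (Fin (n+1)) ℤ) - X (Fin.last n)))
      * ∑ μ ∈ Fintype.piFinset (fun j : Fin n => Finset.Icc (lam j.succ) (lam j.castSucc)),
          (∏ j : Fin n, (X (Fin.last n) : MvPolynomial (Fin (n+1)) ℤ) ^ (lam j.castSucc - μ j)) *
          (Matrix.of fun i j : Fin n =>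
            (X i.castSucc : MvPolynomial (Fin (n+1)) ℤ) ^ (μ j + (n - 1 - (j:ℕ)))).det := by
  classical
  set t : MvPolynomial (Fin (n+1)) ℤ := X (Fin.last n) with ht
  set e : Fin (n+1) → ℕ := fun j => lam j + (n - (j:ℕ)) with he
  set a : Fin n → ℕ := fun j => lam j.castSucc - lam j.succ + 1 with ha
  have hlamj : ∀ j : Fin n, lam j.succ ≤ lam j.castSucc :=
    fun j => hlam (Fin.castSucc_le_succ j)
  have hE1 : ∀ j : Fin n, e j.castSucc = a j + e j.succ := by
    intro j
    have h1 := hlamj j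
    have hj : (j:ℕ) < n := j.isLt
    simp only [he, ha, Fin.coe_castSucc, Fin.val_succ]
    omega
  set U : Matrix (Fin (n+1)) (Fin (n+1)) (MvPolynomial (Fin (n+1)) ℤ) := Matrix.of fun j k =>
    Fin.lastCases (if j = Fin.last n then 1 else 0)
      (fun k₀ => if j = k₀.castSucc then 1 else if j = k₀.succ then -(t ^ a k₀) else 0) k with hU
  have hUdiag : ∀ k, U k k = 1 := by
    intro k
    cases k using Fin.lastCases with
    | last => simp [hU]
    | cast k₀ => simp [hU]
  have hUtri : ∀ j k : Fin (n+1), j < k → U j k = 0 := by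
    intro j k hjk
    cases k using Fin.lastCases with
    | last => simp [hU, Fin.ne_of_lt hjk]
    | cast k₀ =>
      have h1 : j ≠ k₀.castSucc := Fin.ne_of_lt hjk
      have h2 : j ≠ k₀.succ := by
        intro h
        rw [h] at hjk
        exact absurd hjk (by simp [Fin.lt_iff_val_lt_val])
      simp [hU, h1, h2]
  have hUdet : U.det = 1 := by
    rw [Matrix.det_of_lowerTriangular U (fun i j hij => hUtri i j hij)]
    exact Finset.prod_eq_one fun k _ => hUdiag k
  set M : Matrix (Fin (n+1)) (Fin (n+1)) (MvPolynomial (Fin (n+1)) ℤ) :=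
    Matrix.of fun i j => (X i : MvPolynomial (Fin (n+1)) ℤ) ^ (e j) with hM
  set N : Matrix (Fin (n+1)) (Fin (n+1)) (MvPolynomial (Fin (n+1)) ℤ) := Matrix.of fun i k =>
    Fin.lastCases ((X i : MvPolynomial (Fin (n+1)) ℤ) ^ e (Fin.last n))
      (fun k₀ => (X i : MvPolynomial (Fin (n+1)) ℤ) ^ e k₀.castSucc
        - t ^ a k₀ * (X i : MvPolynomial (Fin (n+1)) ℤ) ^ e k₀.succ) k with hN
  have hMN : N = M * U := by
    ext i k
    rw [Matrix.mul_apply]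
    cases k using Fin.lastCases with
    | last =>
      simp only [hN, hU, Matrix.of_apply, Fin.lastCases_last, mul_ite, mul_one, mul_zero]
      rw [Finset.sum_ite_eq' Finset.univ (Fin.last n) (fun j => M i j)]
      simp [hM]
    | cast k₀ =>
      have hcs : (k₀.castSucc : Fin (n+1)) ≠ k₀.succ := by
        simp [Fin.ext_iff]
      have key : ∀ j, M i j * U j k₀.castSucc
          = (if j = k₀.castSucc then M i j else 0)
            + (if j = k₀.succ then -(t ^ a k₀) * M i j else 0) := by
        intro j
        simp only [hU, Matrix.of_apply, Fin.lastCases_castSucc]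
        by_cases h1 : j = k₀.castSucc
        · subst h1; simp [hcs]
        · by_cases h2 : j = k₀.succ
          · subst h2; simp [h1]; ring
          · simp [h1, h2]
      rw [Finset.sum_congr rfl (fun j _ => key j), Finset.sum_add_distrib,
        Finset.sum_ite_eq' Finset.univ k₀.castSucc (fun j => M i j),
        Finset.sum_ite_eq' Finset.univ k₀.succ (fun j => -(t ^ a k₀) * M i j)]
      simp only [Finset.mem_univ, if_true, hN, Matrix.of_apply, Fin.lastCases_castSucc, hM]
      ring
  have hdetN : N.det = M.det := by rw [hMN, Matrix.det_mul, hUdet, mul_one]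
  have hNlast0 : ∀ k₀ : Fin n, N (Fin.last n) k₀.castSucc = 0 := by
    intro k₀
    simp only [hN, Matrix.of_apply, Fin.lastCases_castSucc]
    rw [hE1 k₀, pow_add, ← ht]
    ring
  have hNlastlast : N (Fin.last n) (Fin.last n) = t ^ lam (Fin.last n) := by
    simp only [hN, Matrix.of_apply, Fin.lastCases_last, ← ht]
    congr 1
    simp [he]
  have hexp : N.det = N (Fin.last n) (Fin.last n)
      * (N.submatrix Fin.castSucc Fin.castSucc).det := by
    rw [Matrix.det_succ_row N (Fin.last n)]
    rw [Finset.sum_eq_single (Fin.last n)]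
    · rw [Fin.succAbove_last, Fin.val_last]
      have h2 : ((-1 : MvPolynomial (Fin (n+1)) ℤ)) ^ (n + n) = 1 :=
        Even.neg_one_pow ⟨n, rfl⟩
      rw [h2, one_mul]
    · intro k _ hk
      obtain ⟨k₀, rfl⟩ : ∃ k₀ : Fin n, k₀.castSucc = k := ⟨k.castPred hk, by simp⟩
      rw [hNlast0 k₀]
      ring
    · intro h; exact absurd (Finset.mem_univ _) h
  set Smat : Matrix (Fin n) (Fin n) (MvPolynomial (Fin (n+1)) ℤ) := Matrix.of fun i j =>
    ∑ m ∈ Finset.Icc (lam j.succ) (lam j.castSucc),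
      t ^ (lam j.castSucc - m) * (X i.castSucc : MvPolynomial (Fin (n+1)) ℤ) ^ (m + (n - 1 - (j:ℕ)))
    with hS
  have hfactor : ∀ (i j : Fin n), N i.castSucc j.castSucc
      = ((X i.castSucc : MvPolynomial (Fin (n+1)) ℤ) - t) * Smat i j := by
    intro i j
    have hg := geom_sum_mul_Icc (X i.castSucc : MvPolynomial (Fin (n+1)) ℤ) t (n - 1 - (j:ℕ))
      (lam j.succ) (lam j.castSucc) (hlamj j)
    have hj : (j:ℕ) < n := j.isLt
    have e1 : lam j.castSucc + (n - 1 - (j:ℕ)) + 1 = e j.castSucc := by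
      simp only [he, Fin.coe_castSucc]; omega
    have e2 : lam j.castSucc - lam j.succ + 1 = a j := rfl
    have e3 : lam j.succ + (n - 1 - (j:ℕ)) = e j.succ := by
      simp only [he, Fin.val_succ]; omega
    rw [e1, e2, e3] at hg
    rw [hS]
    simp only [hN, Matrix.of_apply, Fin.lastCases_castSucc]
    rw [← hg]
  have hsub : (N.submatrix Fin.castSucc Fin.castSucc).det
      = (∏ i : Fin n, ((X i.castSucc : MvPolynomial (Fin (n+1)) ℤ) - t)) * Smat.det := by
    have h1 : N.submatrix Fin.castSucc Fin.castSucc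
        = Matrix.of (fun i j => ((X i.castSucc : MvPolynomial (Fin (n+1)) ℤ) - t) * Smat i j) := by
      exact Matrix.ext hfactor
    rw [h1, Matrix.det_mul_column]
  have hSdet : Smat.det
      = ∑ μ ∈ Fintype.piFinset (fun j : Fin n => Finset.Icc (lam j.succ) (lam j.castSucc)),
          (∏ j : Fin n, t ^ (lam j.castSucc - μ j)) *
          (Matrix.of fun i j : Fin n =>
            (X i.castSucc : MvPolynomial (Fin (n+1)) ℤ) ^ (μ j + (n - 1 - (j:ℕ)))).det := by
    rw [← Matrix.det_transpose Smat]
    have h1 : Smat.transpose = Matrix.of fun (j i : Fin n) =>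
        ∑ m ∈ Finset.Icc (lam j.succ) (lam j.castSucc),
          (fun i : Fin n => t ^ (lam j.castSucc - m)
            * (X i.castSucc : MvPolynomial (Fin (n+1)) ℤ) ^ (m + (n - 1 - (j:ℕ)))) i := rfl
    rw [h1, det_rows_sum (A := fun j : Fin n => Finset.Icc (lam j.succ) (lam j.castSucc))
      (f := fun j m i => t ^ (lam j.castSucc - m)
        * (X i.castSucc : MvPolynomial (Fin (n+1)) ℤ) ^ (m + (n - 1 - (j:ℕ))))]
    refine Finset.sum_congr rfl fun μ hμ => ?_
    have hdm := Matrix.det_mul_column (fun j => t ^ (lam j.castSucc - μ j))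
      (Matrix.of fun (j i : Fin n) =>
        (X i.castSucc : MvPolynomial (Fin (n+1)) ℤ) ^ (μ j + (n - 1 - (j:ℕ))))
    simp only [Matrix.of_apply] at hdm
    rw [hdm]
    congr 1
    exact Matrix.det_transpose
      (Matrix.of fun i j : Fin n =>
        (X i.castSucc : MvPolynomial (Fin (n+1)) ℤ) ^ (μ j + (n - 1 - (j:ℕ))))
  calc M.det = N.det := hdetN.symm
    _ = N (Fin.last n) (Fin.last n) * (N.submatrix Fin.castSucc Fin.castSucc).det := hexp
    _ = _ := by rw [hNlastlast, hsub, hSdet]; ring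


lemma card_filter_lower {m : ℕ} (p : Fin m → Prop) [DecidablePred p]
    (hp : ∀ (j j' : Fin m), j ≤ j' → p j' → p j) (j : Fin m) :
    p j ↔ (j:ℕ) < (Finset.univ.filter p).card := by
  constructor
  · intro hj
    have hsub : Finset.Iic j ⊆ Finset.univ.filter p := by
      intro j' hj'
      simp only [Finset.mem_filter, Finset.mem_univ, true_and]
      exact hp j' j (Finset.mem_Iic.mp hj') hj
    have := Finset.card_le_card hsub
    rw [Fin.card_Iic] at this
    omega
  · intro hlt
    by_contra hj
    have hsub : Finset.univ.filter p ⊆ Finset.Iio j := by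
      intro j' hj'
      simp only [Finset.mem_filter, Finset.mem_univ, true_and] at hj'
      rw [Finset.mem_Iio]
      by_contra hge
      exact hj (hp j j' (le_of_not_gt hge) hj')
    have := Finset.card_le_card hsub
    rw [Fin.card_Iio] at this
    omega

lemma card_filter_coe_lt {m c : ℕ} (hcm : c ≤ m) :
    (Finset.univ.filter (fun j : Fin m => (j:ℕ) < c)).card = c := by
  have hlow := card_filter_lower (fun j : Fin m => (j:ℕ) < c)
    (fun j j' hle hj' => lt_of_le_of_lt hle hj')
  set k := (Finset.univ.filter (fun j : Fin m => (j:ℕ) < c)).card with hk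
  have hkm : k ≤ m := le_trans (Finset.card_filter_le _ _) (by simp)
  rcases lt_trichotomy k c with h | h | h
  · exfalso
    have h2 := (hlow ⟨k, lt_of_lt_of_le h hcm⟩).mp (by simpa using h)
    simp at h2
  · exact h
  · exfalso
    have h2 := (hlow ⟨c, lt_of_lt_of_le h hkm⟩).mpr (by simpa using h)
    simp at h2


section Tableaux

variable {n : ℕ} (lam : Fin (n+1) → ℕ)

/-- number of entries `< n` in row `i.castSucc` of `T`. -/
noncomputable def cnt (T : ∀ i : Fin (n+1), Fin (lam i) → Fin (n+1)) (i : Fin n) : ℕ :=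
  (Finset.univ.filter (fun j : Fin (lam i.castSucc) => (T i.castSucc j : ℕ) < n)).card

/-- extend a small tableau of shape `μ` to a big one of shape `lam`, filling with `n`. -/
def extT (μ : Fin n → ℕ) (T' : ∀ i : Fin n, Fin (μ i) → Fin n) :
    ∀ i : Fin (n+1), Fin (lam i) → Fin (n+1) := fun i =>
  Fin.lastCases (motive := fun i => Fin (lam i) → Fin (n+1)) (fun _ => Fin.last n)
    (fun i₀ j => if h : (j:ℕ) < μ i₀ then (T' i₀ ⟨j, h⟩).castSucc else Fin.last n) i

/-- restrict a big tableau to the entries `< n`, a tableau of shape `μ`. -/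
def resT (μ : Fin n → ℕ) (T : ∀ i : Fin (n+1), Fin (lam i) → Fin (n+1)) :
    ∀ i : Fin n, Fin (μ i) → Fin n := fun i j =>
  if h : (j:ℕ) < lam i.castSucc then
    (if h2 : (T i.castSucc ⟨j, h⟩ : ℕ) < n then (⟨(T i.castSucc ⟨j, h⟩ : ℕ), h2⟩ : Fin n)
     else ⟨0, i.pos⟩)
  else ⟨0, i.pos⟩

variable {lam}

lemma cnt_iff {T : ∀ i : Fin (n+1), Fin (lam i) → Fin (n+1)} (hT : IsSSYT lam T)
    (i : Fin n) (j : Fin (lam i.castSucc)) :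
    (T i.castSucc j : ℕ) < n ↔ (j:ℕ) < cnt lam T i := by
  classical
  exact card_filter_lower (fun j : Fin (lam i.castSucc) => (T i.castSucc j : ℕ) < n)
    (fun j j' hle hj' => lt_of_le_of_lt (Fin.le_def.mp (hT.1 i.castSucc j j' hle)) hj') j

lemma entry_eq_last {T : ∀ i : Fin (n+1), Fin (lam i) → Fin (n+1)}
    {i : Fin (n+1)} {j : Fin (lam i)} (h : ¬ (T i j : ℕ) < n) : T i j = Fin.last n := by
  have := (T i j).isLt
  apply Fin.ext
  simp only [Fin.val_last]
  omega

lemma row_ge {T : ∀ i : Fin (n+1), Fin (lam i) → Fin (n+1)} (hlam : Antitone lam)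
    (hT : IsSSYT lam T) : ∀ (i : Fin (n+1)) (j : Fin (lam i)), (i:ℕ) ≤ (T i j : ℕ) := by
  intro i
  induction i using Fin.induction with
  | zero => intro j; exact Nat.zero_le _
  | succ i₀ ih =>
    intro j
    have hcell : (j:ℕ) < lam i₀.castSucc :=
      lt_of_lt_of_le j.isLt (hlam (le_of_lt (Fin.castSucc_lt_succ (i := i₀))))
    have hcol := hT.2 i₀.castSucc i₀.succ ⟨j, hcell⟩ j (Fin.castSucc_lt_succ (i := i₀)) rfl
    have hih := ih ⟨j, hcell⟩
    have hlt : (T i₀.castSucc ⟨j, hcell⟩ : ℕ) < (T i₀.succ j : ℕ) := hcol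
    simp only [Fin.coe_castSucc] at hih
    simp only [Fin.val_succ]
    omega

lemma last_row {T : ∀ i : Fin (n+1), Fin (lam i) → Fin (n+1)} (hlam : Antitone lam)
    (hT : IsSSYT lam T) (j : Fin (lam (Fin.last n))) : T (Fin.last n) j = Fin.last n := by
  have h1 := row_ge hlam hT (Fin.last n) j
  simp only [Fin.val_last] at h1
  exact entry_eq_last (by omega)

lemma cnt_le {T : ∀ i : Fin (n+1), Fin (lam i) → Fin (n+1)} (i : Fin n) :
    cnt lam T i ≤ lam i.castSucc := by
  classical
  exact le_trans (Finset.card_filter_le _ _) (by simp)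

lemma cnt_ge {T : ∀ i : Fin (n+1), Fin (lam i) → Fin (n+1)} (hlam : Antitone lam)
    (hT : IsSSYT lam T) (i : Fin n) : lam i.succ ≤ cnt lam T i := by
  by_contra hcon
  push_neg at hcon
  have hlt : cnt lam T i < lam i.castSucc :=
    lt_of_lt_of_le hcon (hlam (le_of_lt (Fin.castSucc_lt_succ (i := i))))
  set j : Fin (lam i.castSucc) := ⟨cnt lam T i, hlt⟩ with hj
  have hcol := hT.2 i.castSucc i.succ j ⟨cnt lam T i, hcon⟩ (Fin.castSucc_lt_succ (i := i)) rfl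
  have hlt2 : (T i.castSucc j : ℕ) < n := by
    have h2 := (T i.succ ⟨cnt lam T i, hcon⟩).isLt
    have : (T i.castSucc j : ℕ) < (T i.succ ⟨cnt lam T i, hcon⟩ : ℕ) := hcol
    omega
  have := (cnt_iff hT i j).mp hlt2
  simp [hj] at this

lemma cnt_mem {T : ∀ i : Fin (n+1), Fin (lam i) → Fin (n+1)} (hlam : Antitone lam)
    (hT : IsSSYT lam T) :
    cnt lam T ∈ Fintype.piFinset (fun j : Fin n => Finset.Icc (lam j.succ) (lam j.castSucc)) := by
  rw [Fintype.mem_piFinset]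
  intro i
  rw [Finset.mem_Icc]
  exact ⟨cnt_ge hlam hT i, cnt_le i⟩


lemma extT_castSucc (μ : Fin n → ℕ) (T' : ∀ i : Fin n, Fin (μ i) → Fin n)
    (i₀ : Fin n) (j : Fin (lam i₀.castSucc)) :
    extT lam μ T' i₀.castSucc j
      = if h : (j:ℕ) < μ i₀ then (T' i₀ ⟨j, h⟩).castSucc else Fin.last n := by
  simp [extT]

lemma extT_last (μ : Fin n → ℕ) (T' : ∀ i : Fin n, Fin (μ i) → Fin n)
    (j : Fin (lam (Fin.last n))) : extT lam μ T' (Fin.last n) j = Fin.last n := by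
  simp [extT]

lemma key_lt {μ : Fin n → ℕ} (hlam : Antitone lam) (hμ1 : ∀ i : Fin n, lam i.succ ≤ μ i)
    (i₀ : Fin n) (i' : Fin (n+1)) (h : i₀.castSucc < i') {c : ℕ} (hc : c < lam i') :
    c < μ i₀ := by
  have h1 : i₀.succ ≤ i' := by
    rw [Fin.le_def, Fin.val_succ]
    rw [Fin.lt_def, Fin.coe_castSucc] at h
    omega
  exact lt_of_lt_of_le (lt_of_lt_of_le hc (hlam h1)) (hμ1 i₀)

lemma isSSYT_extT {μ : Fin n → ℕ} {T' : ∀ i : Fin n, Fin (μ i) → Fin n}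
    (hlam : Antitone lam) (hμ1 : ∀ i : Fin n, lam i.succ ≤ μ i) (hT' : IsSSYT μ T') :
    IsSSYT lam (extT lam μ T') := by
  constructor
  · intro i j j' hjj'
    induction i using Fin.lastCases with
    | last => simp [extT_last]
    | cast i₀ =>
      rw [extT_castSucc, extT_castSucc]
      by_cases h1 : (j:ℕ) < μ i₀
      · by_cases h2 : (j':ℕ) < μ i₀
        · rw [dif_pos h1, dif_pos h2]
          exact Fin.castSucc_le_castSucc_iff.mpr
            (hT'.1 i₀ ⟨j, h1⟩ ⟨j', h2⟩ (Fin.le_def.mpr (Fin.le_def.mp hjj')))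
        · rw [dif_pos h1, dif_neg h2]
          exact Fin.le_last _
      · by_cases h2 : (j':ℕ) < μ i₀
        · exact absurd (lt_of_le_of_lt (Fin.le_def.mp hjj') h2) h1
        · rw [dif_neg h1, dif_neg h2]
  · intro i i' j j' hii' hjj'
    induction i' using Fin.lastCases with
    | last =>
      induction i using Fin.lastCases with
      | last => exact absurd hii' (lt_irrefl _)
      | cast i₀ =>
        have hj : (j:ℕ) < μ i₀ := key_lt hlam hμ1 i₀ (Fin.last n) hii' (hjj' ▸ j'.isLt)
        rw [extT_castSucc, dif_pos hj, extT_last]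
        exact Fin.castSucc_lt_last _
    | cast i₀' =>
      induction i using Fin.lastCases with
      | last => exact absurd (lt_of_lt_of_le hii' (Fin.le_last _)) (lt_irrefl _)
      | cast i₀ =>
        have hj : (j:ℕ) < μ i₀ := key_lt hlam hμ1 i₀ i₀'.castSucc hii' (hjj' ▸ j'.isLt)
        rw [extT_castSucc, dif_pos hj, extT_castSucc]
        by_cases h2 : (j':ℕ) < μ i₀'
        · rw [dif_pos h2]
          exact Fin.castSucc_lt_castSucc_iff.mpr
            (hT'.2 i₀ i₀' ⟨j, hj⟩ ⟨j', h2⟩ (Fin.castSucc_lt_castSucc_iff.mp hii') hjj')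
        · rw [dif_neg h2]
          exact Fin.castSucc_lt_last _

lemma cnt_extT {μ : Fin n → ℕ} {T' : ∀ i : Fin n, Fin (μ i) → Fin n}
    (hμ2 : ∀ i : Fin n, μ i ≤ lam i.castSucc) :
    cnt lam (extT lam μ T') = μ := by
  classical
  funext i
  rw [cnt]
  rw [Finset.filter_congr (q := fun j : Fin (lam i.castSucc) => (j:ℕ) < μ i)
    (fun j _ => by
      rw [extT_castSucc]
      by_cases h : (j:ℕ) < μ i
      · simp only [dif_pos h, Fin.coe_castSucc]
        simp [h, (T' i ⟨j, h⟩).isLt]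
      · simp [dif_neg h, h])]
  exact card_filter_coe_lt (hμ2 i)

lemma resT_apply {μ : Fin n → ℕ} {T : ∀ i : Fin (n+1), Fin (lam i) → Fin (n+1)}
    (i : Fin n) (j : Fin (μ i)) (h1 : (j:ℕ) < lam i.castSucc)
    (h2 : (T i.castSucc ⟨j, h1⟩ : ℕ) < n) :
    resT lam μ T i j = ⟨(T i.castSucc ⟨j, h1⟩ : ℕ), h2⟩ := by
  rw [resT, dif_pos h1, dif_pos h2]

lemma resT_extT {μ : Fin n → ℕ} {T' : ∀ i : Fin n, Fin (μ i) → Fin n}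
    (hμ2 : ∀ i : Fin n, μ i ≤ lam i.castSucc) :
    resT lam μ (extT lam μ T') = T' := by
  funext i j
  have h1 : (j:ℕ) < lam i.castSucc := lt_of_lt_of_le j.isLt (hμ2 i)
  have hx : extT lam μ T' i.castSucc ⟨j, h1⟩ = (T' i j).castSucc := by
    rw [extT_castSucc, dif_pos (show ((⟨(j:ℕ), h1⟩ : Fin (lam i.castSucc)) : ℕ) < μ i from j.isLt)]
  have h2 : (extT lam μ T' i.castSucc ⟨j, h1⟩ : ℕ) < n := by
    rw [hx, Fin.coe_castSucc]; exact (T' i j).isLt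
  rw [resT_apply i j h1 h2]
  apply Fin.ext
  simp [hx]

lemma isSSYT_resT {μ : Fin n → ℕ} {T : ∀ i : Fin (n+1), Fin (lam i) → Fin (n+1)}
    (hT : IsSSYT lam T) (hμ2 : ∀ i : Fin n, μ i ≤ lam i.castSucc)
    (char : ∀ (i : Fin n) (j : Fin (lam i.castSucc)), (T i.castSucc j : ℕ) < n ↔ (j:ℕ) < μ i) :
    IsSSYT μ (resT lam μ T) := by
  constructor
  · intro i j j' hjj'
    have h1 : (j:ℕ) < lam i.castSucc := lt_of_lt_of_le j.isLt (hμ2 i)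
    have h1' : (j':ℕ) < lam i.castSucc := lt_of_lt_of_le j'.isLt (hμ2 i)
    have h2 : (T i.castSucc ⟨j, h1⟩ : ℕ) < n := (char i ⟨j, h1⟩).mpr j.isLt
    have h2' : (T i.castSucc ⟨j', h1'⟩ : ℕ) < n := (char i ⟨j', h1'⟩).mpr j'.isLt
    rw [resT_apply i j h1 h2, resT_apply i j' h1' h2']
    exact Fin.le_def.mpr (Fin.le_def.mp
      (hT.1 i.castSucc ⟨j, h1⟩ ⟨j', h1'⟩ (Fin.le_def.mpr (Fin.le_def.mp hjj'))))
  · intro i i' j j' hii' hjj'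
    have h1 : (j:ℕ) < lam i.castSucc := lt_of_lt_of_le j.isLt (hμ2 i)
    have h1' : (j':ℕ) < lam i'.castSucc := lt_of_lt_of_le j'.isLt (hμ2 i')
    have h2 : (T i.castSucc ⟨j, h1⟩ : ℕ) < n := (char i ⟨j, h1⟩).mpr j.isLt
    have h2' : (T i'.castSucc ⟨j', h1'⟩ : ℕ) < n := (char i' ⟨j', h1'⟩).mpr j'.isLt
    rw [resT_apply i j h1 h2, resT_apply i' j' h1' h2']
    exact Fin.lt_def.mpr (Fin.lt_def.mp
      (hT.2 i.castSucc i'.castSucc ⟨j, h1⟩ ⟨j', h1'⟩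
        (Fin.castSucc_lt_castSucc_iff.mpr hii') hjj'))

lemma extT_resT {μ : Fin n → ℕ} {T : ∀ i : Fin (n+1), Fin (lam i) → Fin (n+1)}
    (hlam : Antitone lam) (hT : IsSSYT lam T)
    (char : ∀ (i : Fin n) (j : Fin (lam i.castSucc)), (T i.castSucc j : ℕ) < n ↔ (j:ℕ) < μ i) :
    extT lam μ (resT lam μ T) = T := by
  funext i j
  induction i using Fin.lastCases with
  | last =>
    rw [extT_last]
    exact (last_row hlam hT j).symm
  | cast i₀ =>
    rw [extT_castSucc]
    by_cases hj : (j:ℕ) < μ i₀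
    · rw [dif_pos hj]
      have heta : (⟨((⟨(j:ℕ), hj⟩ : Fin (μ i₀)) : ℕ), j.isLt⟩ : Fin (lam i₀.castSucc)) = j :=
        Fin.ext rfl
      have h2 : (T i₀.castSucc ⟨((⟨(j:ℕ), hj⟩ : Fin (μ i₀)) : ℕ), j.isLt⟩ : ℕ) < n := by
        rw [heta]; exact (char i₀ j).mpr hj
      rw [resT_apply i₀ ⟨(j:ℕ), hj⟩ j.isLt h2]
      apply Fin.ext
      rw [Fin.coe_castSucc]
    · rw [dif_neg hj]
      exact (entry_eq_last (fun hlt => hj ((char i₀ j).mp hlt))).symm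


lemma weight_decomp {μ : Fin n → ℕ} {T : ∀ i : Fin (n+1), Fin (lam i) → Fin (n+1)}
    (hlam : Antitone lam) (hT : IsSSYT lam T) (hc : cnt lam T = μ) :
    ∏ i : Fin (n+1), ∏ j : Fin (lam i), (X (T i j) : MvPolynomial (Fin (n+1)) ℤ)
    = X (Fin.last n) ^ lam (Fin.last n)
      * (∏ i : Fin n, (X (Fin.last n) : MvPolynomial (Fin (n+1)) ℤ) ^ (lam i.castSucc - μ i))
      * rename Fin.castSucc
          (∏ i : Fin n, ∏ j : Fin (μ i), (X (resT lam μ T i j) : MvPolynomial (Fin n) ℤ)) := by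
  classical
  have hμ2 : ∀ i : Fin n, μ i ≤ lam i.castSucc := fun i => by
    rw [← hc]; exact cnt_le i
  have char : ∀ (i : Fin n) (j : Fin (lam i.castSucc)),
      (T i.castSucc j : ℕ) < n ↔ (j:ℕ) < μ i := fun i j => by
    rw [← hc]; exact cnt_iff hT i j
  rw [Fin.prod_univ_castSucc]
  have hlast : ∏ j : Fin (lam (Fin.last n)), (X (T (Fin.last n) j) : MvPolynomial (Fin (n+1)) ℤ)
      = X (Fin.last n) ^ lam (Fin.last n) := by
    rw [Finset.prod_congr rfl (fun j _ => by rw [last_row hlam hT j]),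
      Finset.prod_const, Finset.card_univ, Fintype.card_fin]
  have hrow : ∀ i : Fin n,
      ∏ j : Fin (lam i.castSucc), (X (T i.castSucc j) : MvPolynomial (Fin (n+1)) ℤ)
      = (∏ j : Fin (μ i), (X ((resT lam μ T i j).castSucc) : MvPolynomial (Fin (n+1)) ℤ))
        * X (Fin.last n) ^ (lam i.castSucc - μ i) := by
    intro i
    rw [← Finset.prod_filter_mul_prod_filter_not Finset.univ
      (fun j : Fin (lam i.castSucc) => (T i.castSucc j : ℕ) < n)]
    have hpart2 : ∏ j ∈ Finset.univ.filter
          (fun j : Fin (lam i.castSucc) => ¬ (T i.castSucc j : ℕ) < n),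
          (X (T i.castSucc j) : MvPolynomial (Fin (n+1)) ℤ)
        = X (Fin.last n) ^ (lam i.castSucc - μ i) := by
      rw [Finset.prod_congr rfl (fun j hj => by
        rw [entry_eq_last (Finset.mem_filter.mp hj).2]), Finset.prod_const]
      congr 1
      have hcard := Finset.card_filter_add_card_filter_not
        (s := (Finset.univ : Finset (Fin (lam i.castSucc))))
        (p := fun j : Fin (lam i.castSucc) => (T i.castSucc j : ℕ) < n)
      have hcnt : (Finset.univ.filter
          (fun j : Fin (lam i.castSucc) => (T i.castSucc j : ℕ) < n)).card = μ i := by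
        rw [← hc]; rfl
      rw [Finset.card_univ, Fintype.card_fin] at hcard
      omega
    have hpart1 : ∏ j ∈ Finset.univ.filter
          (fun j : Fin (lam i.castSucc) => (T i.castSucc j : ℕ) < n),
          (X (T i.castSucc j) : MvPolynomial (Fin (n+1)) ℤ)
        = ∏ j : Fin (μ i), (X ((resT lam μ T i j).castSucc) : MvPolynomial (Fin (n+1)) ℤ) := by
      refine Finset.prod_bij'
        (i := fun a ha => (⟨(a:ℕ), (char i a).mp (Finset.mem_filter.mp ha).2⟩ : Fin (μ i)))
        (j := fun b _ => (⟨(b:ℕ), lt_of_lt_of_le b.isLt (hμ2 i)⟩ : Fin (lam i.castSucc)))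
        ?_ ?_ ?_ ?_ ?_
      · intro a ha; exact Finset.mem_univ _
      · intro b _
        rw [Finset.mem_filter]
        refine ⟨Finset.mem_univ _, ?_⟩
        exact (char i _).mpr (by simpa using b.isLt)
      · intro a ha; exact Fin.ext rfl
      · intro b hb; exact Fin.ext rfl
      · intro a ha
        have hpa := (Finset.mem_filter.mp ha).2
        have heta : (⟨((⟨(a:ℕ), (char i a).mp hpa⟩ : Fin (μ i)) : ℕ),
            lt_of_lt_of_le (⟨(a:ℕ), (char i a).mp hpa⟩ : Fin (μ i)).isLt (hμ2 i)⟩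
            : Fin (lam i.castSucc)) = a := Fin.ext rfl
        have h2 : (T i.castSucc ⟨((⟨(a:ℕ), (char i a).mp hpa⟩ : Fin (μ i)) : ℕ),
            lt_of_lt_of_le (⟨(a:ℕ), (char i a).mp hpa⟩ : Fin (μ i)).isLt (hμ2 i)⟩ : ℕ) < n := by
          rw [heta]; exact hpa
        rw [resT_apply i _ _ h2]
        refine congrArg X (Fin.ext ?_)
        rw [Fin.coe_castSucc]
    rw [hpart1, hpart2]
  rw [hlast, Finset.prod_congr rfl (fun i _ => hrow i), Finset.prod_mul_distrib]
  have hren : (rename (Fin.castSucc)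
      (∏ i : Fin n, ∏ j : Fin (μ i), (X (resT lam μ T i j) : MvPolynomial (Fin n) ℤ))
        : MvPolynomial (Fin (n+1)) ℤ)
      = ∏ i : Fin n, ∏ j : Fin (μ i),
          (X ((resT lam μ T i j).castSucc) : MvPolynomial (Fin (n+1)) ℤ) := by
    rw [map_prod]
    refine Finset.prod_congr rfl fun i _ => ?_
    rw [map_prod]
    exact Finset.prod_congr rfl fun j _ => rename_X _ _
  rw [hren]
  ring

end Tableaux

lemma branching (n : ℕ) (lam : Fin (n+1) → ℕ) (hlam : Antitone lam) :
    schurPoly (n+1) lam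
    = ∑ μ ∈ Fintype.piFinset (fun j : Fin n => Finset.Icc (lam j.succ) (lam j.castSucc)),
        X (Fin.last n) ^ lam (Fin.last n)
        * (∏ j : Fin n, (X (Fin.last n) : MvPolynomial (Fin (n+1)) ℤ) ^ (lam j.castSucc - μ j))
        * rename Fin.castSucc (schurPoly n μ) := by
  classical
  rw [schurPoly_eq_sum]
  rw [← Finset.sum_fiberwise_of_maps_to
    (g := cnt lam)
    (t := Fintype.piFinset (fun j : Fin n => Finset.Icc (lam j.succ) (lam j.castSucc)))
    (fun T hT => cnt_mem hlam (mem_ssytFinset.mp hT)) _]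
  refine Finset.sum_congr rfl fun μ hμ => ?_
  have hμ1 : ∀ i : Fin n, lam i.succ ≤ μ i :=
    fun i => (Finset.mem_Icc.mp (Fintype.mem_piFinset.mp hμ i)).1
  have hμ2 : ∀ i : Fin n, μ i ≤ lam i.castSucc :=
    fun i => (Finset.mem_Icc.mp (Fintype.mem_piFinset.mp hμ i)).2
  rw [schurPoly_eq_sum n μ, map_sum, Finset.mul_sum]
  refine Finset.sum_nbij' (i := fun T => resT lam μ T) (j := fun T' => extT lam μ T')
    ?_ ?_ ?_ ?_ ?_
  · intro T hT
    have h1 := Finset.mem_filter.mp hT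
    have hT' := mem_ssytFinset.mp h1.1
    have char : ∀ (i : Fin n) (j : Fin (lam i.castSucc)),
        (T i.castSucc j : ℕ) < n ↔ (j:ℕ) < μ i := fun i j => by
      rw [← h1.2]; exact cnt_iff hT' i j
    exact mem_ssytFinset.mpr (isSSYT_resT hT' hμ2 char)
  · intro T' hT'
    rw [Finset.mem_filter]
    exact ⟨mem_ssytFinset.mpr (isSSYT_extT hlam hμ1 (mem_ssytFinset.mp hT')),
      cnt_extT hμ2⟩
  · intro T hT
    have h1 := Finset.mem_filter.mp hT
    have hT' := mem_ssytFinset.mp h1.1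
    have char : ∀ (i : Fin n) (j : Fin (lam i.castSucc)),
        (T i.castSucc j : ℕ) < n ↔ (j:ℕ) < μ i := fun i j => by
      rw [← h1.2]; exact cnt_iff hT' i j
    exact extT_resT hlam hT' char
  · intro T' hT'
    exact resT_extT hμ2
  · intro T hT
    have h1 := Finset.mem_filter.mp hT
    exact weight_decomp hlam (mem_ssytFinset.mp h1.1) h1.2


lemma schurPoly_zero (lam : Fin 0 → ℕ) : schurPoly 0 lam = 1 := by
  classical
  rw [schurPoly_eq_sum]
  have h1 : ssytFinset 0 lam = Finset.univ := by
    ext T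
    simp only [mem_ssytFinset, Finset.mem_univ, iff_true]
    exact ⟨fun i => i.elim0, fun i => i.elim0⟩
  rw [h1]
  simp

lemma antitone_of_mem {n : ℕ} {lam : Fin (n+1) → ℕ} (hlam : Antitone lam)
    {μ : Fin n → ℕ}
    (hμ : μ ∈ Fintype.piFinset (fun j : Fin n => Finset.Icc (lam j.succ) (lam j.castSucc))) :
    Antitone μ := by
  intro i i' hii'
  rcases eq_or_lt_of_le hii' with rfl | hlt
  · exact le_refl _
  · have h1 := (Finset.mem_Icc.mp (Fintype.mem_piFinset.mp hμ i)).1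
    have h2 := (Finset.mem_Icc.mp (Fintype.mem_piFinset.mp hμ i')).2
    have h3 : i.succ ≤ i'.castSucc := by
      rw [Fin.le_def, Fin.val_succ, Fin.coe_castSucc]
      exact Fin.lt_def.mp hlt
    exact le_trans (le_trans h2 (hlam h3)) h1

lemma rename_det {n : ℕ} (g : Fin n → ℕ) :
    (rename (Fin.castSucc)
        ((Matrix.of fun i j : Fin n => (X i : MvPolynomial (Fin n) ℤ) ^ g j).det)
      : MvPolynomial (Fin (n+1)) ℤ)
    = (Matrix.of fun i j : Fin n =>
        (X i.castSucc : MvPolynomial (Fin (n+1)) ℤ) ^ g j).det := by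
  rw [AlgHom.map_det]
  congr 1
  exact Matrix.ext fun i j => by
    simp [AlgHom.mapMatrix_apply, Matrix.map_apply, map_pow]

theorem aux : ∀ (n : ℕ) (lam : Fin n → ℕ), Antitone lam →
    schurPoly n lam *
      (Matrix.of fun i j : Fin n =>
        (X i : MvPolynomial (Fin n) ℤ) ^ (n - 1 - (j : ℕ))).det
    = (Matrix.of fun i j : Fin n =>
        (X i : MvPolynomial (Fin n) ℤ) ^ (lam j + (n - 1 - (j : ℕ)))).det := by
  intro n
  induction n with
  | zero =>
    intro lam _
    rw [schurPoly_zero]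
    simp [Matrix.det_fin_zero]
  | succ n IH =>
    intro lam hlam
    show schurPoly (n+1) lam *
        (Matrix.of fun i j : Fin (n+1) =>
          (X i : MvPolynomial (Fin (n+1)) ℤ) ^ (n - (j : ℕ))).det
      = (Matrix.of fun i j : Fin (n+1) =>
          (X i : MvPolynomial (Fin (n+1)) ℤ) ^ (lam j + (n - (j : ℕ)))).det
    have hzero : Antitone (fun _ : Fin (n+1) => (0:ℕ)) := fun _ _ _ => le_refl _
    -- Vandermonde factorization, from `alternant_branch` applied to the zero partition
    have hV : (Matrix.of fun i j : Fin (n+1) =>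
          (X i : MvPolynomial (Fin (n+1)) ℤ) ^ (n - (j : ℕ))).det
        = (∏ i : Fin n, ((X i.castSucc : MvPolynomial (Fin (n+1)) ℤ) - X (Fin.last n)))
          * (Matrix.of fun i j : Fin n =>
              (X i.castSucc : MvPolynomial (Fin (n+1)) ℤ) ^ (n - 1 - (j : ℕ))).det := by
      have h0 := alternant_branch (fun _ : Fin (n+1) => (0:ℕ)) hzero
      simp only [Nat.zero_add, pow_zero, one_mul, Nat.zero_sub, Finset.prod_const_one] at h0
      have hpi : Fintype.piFinset (fun _ : Fin n => Finset.Icc (0:ℕ) 0)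
          = {fun _ => 0} := by
        ext μ
        simp only [Fintype.mem_piFinset, Finset.mem_Icc, Finset.mem_singleton]
        constructor
        · intro h; funext i; exact Nat.le_zero.mp (h i).2
        · intro h; subst h; intro i; exact ⟨le_refl _, le_refl _⟩
      rw [hpi, Finset.sum_singleton] at h0
      simp only [Nat.zero_add] at h0
      exact h0
    rw [branching n lam hlam, hV, alternant_branch lam hlam, Finset.sum_mul,
      Finset.mul_sum]
    refine Finset.sum_congr rfl fun μ hμ => ?_
    have hren : (rename (Fin.castSucc) (schurPoly n μ) : MvPolynomial (Fin (n+1)) ℤ)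
        * (Matrix.of fun i j : Fin n =>
            (X i.castSucc : MvPolynomial (Fin (n+1)) ℤ) ^ (n - 1 - (j : ℕ))).det
        = (Matrix.of fun i j : Fin n =>
            (X i.castSucc : MvPolynomial (Fin (n+1)) ℤ) ^ (μ j + (n - 1 - (j : ℕ)))).det := by
      rw [← rename_det (fun j : Fin n => n - 1 - (j:ℕ)),
        ← rename_det (fun j : Fin n => μ j + (n - 1 - (j:ℕ))), ← map_mul]
      congr 1
      exact IH μ (antitone_of_mem hlam hμ)
    rw [← hren]
    ring

end SchurAux

open MvPolynomial in
/-- bialternant formula: for `n ≥ 1` and a partition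
`λ_1 ≥ … ≥ λ_n ≥ 0`, in `ℤ[x_1,…,x_n]`,
`S_λ · det(x_i^{n-j}) = det(x_i^{λ_j + n - j})`. -/
theorem schur_eq_quotient_of_determinants (n : ℕ) (hn : 1 ≤ n)
    (lam : Fin n → ℕ) (hlam : Antitone lam) :
    schurPoly n lam *
      (Matrix.of fun i j : Fin n =>
        (X i : MvPolynomial (Fin n) ℤ) ^ (n - 1 - (j : ℕ))).det
    = (Matrix.of fun i j : Fin n =>
        (X i : MvPolynomial (Fin n) ℤ) ^ (lam j + (n - 1 - (j : ℕ)))).det :=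
  SchurAux.aux n lam hlam

-- #print axioms schur_eq_quotient_of_determinants
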